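/- For all integers n, j ≥ 1 and k ≥ 0, the number of set partitions of [2(n+k+j)+1] with no singleton blocks such that, in the standard representation, vertices 1,…,n+k are openers, vertex n+k+1 is a transitory, the next k vertices are closers, the next j vertices are openers, and the last n+j vertices are closers, equals n! · ( binom(n+k, k) · k! · k + binom(n+k, k+1) · (k+1)! ) · binom(n+j, j) · j!. -/
import Mathlib


/-- The set of arc endpoints of a collection of arcs. -/
def Endpoints (M : Finset (ℕ × ℕ)) : Finset ℕ := M.image Prod.fst ∪ M.image Prod.snd

/-- A partial matching of `[N] = {1,…,N}`: a set of arcs `(i,j)` with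
`1 ≤ i < j ≤ N` whose entries are pairwise disjoint. -/
def IsPartialMatching (N : ℕ) (M : Finset (ℕ × ℕ)) : Prop :=
  (∀ p ∈ M, 1 ≤ p.1 ∧ p.1 < p.2 ∧ p.2 ≤ N) ∧
  (∀ p ∈ M, ∀ q ∈ M, p ≠ q → p.1 ≠ q.1 ∧ p.1 ≠ q.2 ∧ p.2 ≠ q.1 ∧ p.2 ≠ q.2)

/-- A perfect matching of `[N]`: a partial matching whose arcs cover `{1,…,N}`. -/
def IsPerfectMatching (N : ℕ) (M : Finset (ℕ × ℕ)) : Prop :=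
  IsPartialMatching N M ∧ Endpoints M = Finset.Icc 1 N

/-- `A` is a `k`-crossing of `M`: a `k`-element subset of arcs listable as
`(i₁,j₁),…,(i_k,j_k)` with `i₁ < ⋯ < i_k < j₁ < ⋯ < j_k`. -/
def IsCrossing (k : ℕ) (M A : Finset (ℕ × ℕ)) : Prop :=
  A ⊆ M ∧ A.card = k ∧ (∀ p ∈ A, ∀ q ∈ A, p.1 < q.1 → p.2 < q.2) ∧
    (∀ p ∈ A, ∀ q ∈ A, p.1 < q.2)

/-- `A` is a `k`-nesting of `M`: a `k`-element subset of arcs listable as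
`(i₁,j₁),…,(i_k,j_k)` with `i₁ < ⋯ < i_k < j_k < ⋯ < j₁`. -/
def IsNesting (k : ℕ) (M A : Finset (ℕ × ℕ)) : Prop :=
  A ⊆ M ∧ A.card = k ∧ (∀ p ∈ A, ∀ q ∈ A, p.1 < q.1 → q.2 < p.2)

/-- `crNum k M` : the number of `k`-crossings of `M`. -/
noncomputable def crNum (k : ℕ) (M : Finset (ℕ × ℕ)) : ℕ :=
  Nat.card {A : Finset (ℕ × ℕ) // IsCrossing k M A}

/-- `neNum k M` : the number of `k`-nestings of `M`. -/
noncomputable def neNum (k : ℕ) (M : Finset (ℕ × ℕ)) : ℕ :=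
  Nat.card {A : Finset (ℕ × ℕ) // IsNesting k M A}

/-- The four types of vertices in the standard representation of a set partition. -/
inductive VType
  | opener | closer | transitory | fixedpt
deriving DecidableEq

/-- The arc set of the standard representation of a set partition `P` of `{1,…,N}`:
arcs join consecutive elements of a block. -/
def spArcs {N : ℕ} (P : Finpartition (Finset.Icc (1 : ℕ) N)) : Finset (ℕ × ℕ) :=
  ((Finset.Icc (1 : ℕ) N) ×ˢ (Finset.Icc (1 : ℕ) N)).filter fun q =>
    q.1 < q.2 ∧ ∃ B ∈ P.parts, q.1 ∈ B ∧ q.2 ∈ B ∧ ∀ x ∈ B, ¬(q.1 < x ∧ x < q.2)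

/-- The type of the vertex `i` in the standard representation of `P`. -/
def vtype {N : ℕ} (P : Finpartition (Finset.Icc (1 : ℕ) N)) (i : ℕ) : VType :=
  if i ∈ (spArcs P).image Prod.fst then
    (if i ∈ (spArcs P).image Prod.snd then VType.transitory else VType.opener)
  else
    (if i ∈ (spArcs P).image Prod.snd then VType.closer else VType.fixedpt)

/-- The (1-based) rank of `i` inside the finite set `E`. -/
def rankIn (E : Finset ℕ) (i : ℕ) : ℕ := (E.filter fun x => x ≤ i).card


namespace St10
open Finset

/-- successor along the arc set -/
def gM (M : Finset (ℕ × ℕ)) (x : ℕ) : ℕ :=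
  ((M.filter fun p => p.1 = x).image Prod.snd).min.getD x

/-- functional arc sets bounded by N -/
def Hfun (N : ℕ) (M : Finset (ℕ × ℕ)) : Prop :=
  (∀ p ∈ M, 1 ≤ p.1 ∧ p.1 < p.2 ∧ p.2 ≤ N) ∧
  (∀ p ∈ M, ∀ q ∈ M, p.1 = q.1 → p = q) ∧
  (∀ p ∈ M, ∀ q ∈ M, p.2 = q.2 → p = q)

lemma gM_eq_of_mem {M : Finset (ℕ × ℕ)}
    (h2 : ∀ p ∈ M, ∀ q ∈ M, p.1 = q.1 → p = q) {x y : ℕ} (hxy : (x, y) ∈ M) :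
    gM M x = y := by
  have : M.filter (fun p => p.1 = x) = {(x, y)} := by
    ext p
    simp only [mem_filter, mem_singleton]
    constructor
    · rintro ⟨hp, rfl⟩
      exact h2 p hp (p.1, y) hxy rfl
    · rintro rfl; exact ⟨hxy, rfl⟩
  rw [gM, this]
  rfl

lemma gM_of_notMem_fst {M : Finset (ℕ × ℕ)} {x : ℕ}
    (h : x ∉ M.image Prod.fst) : gM M x = x := by
  have : M.filter (fun p => p.1 = x) = ∅ := by
    ext p
    simp only [mem_filter, notMem_empty, iff_false]
    rintro ⟨hp, rfl⟩
    exact h (mem_image.2 ⟨p, hp, rfl⟩)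
  rw [gM, this]
  rfl

lemma gM_spec {M : Finset (ℕ × ℕ)}
    (h2 : ∀ p ∈ M, ∀ q ∈ M, p.1 = q.1 → p = q) {x : ℕ}
    (h : x ∈ M.image Prod.fst) : (x, gM M x) ∈ M := by
  obtain ⟨p, hp, rfl⟩ := mem_image.1 h
  rw [gM_eq_of_mem h2 (x := p.1) (y := p.2) hp]
  exact hp

lemma le_gM {N : ℕ} {M : Finset (ℕ × ℕ)} (hf : Hfun N M) (x : ℕ) : x ≤ gM M x := by
  by_cases h : x ∈ M.image Prod.fst
  · have := gM_spec hf.2.1 h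
    exact le_of_lt (hf.1 _ this).2.1
  · rw [gM_of_notMem_fst h]

lemma lt_gM_of_mem_fst {N : ℕ} {M : Finset (ℕ × ℕ)} (hf : Hfun N M) {x : ℕ}
    (h : x ∈ M.image Prod.fst) : x < gM M x :=
  (hf.1 _ (gM_spec hf.2.1 h)).2.1

lemma gM_le_N {N : ℕ} {M : Finset (ℕ × ℕ)} (hf : Hfun N M) {x : ℕ}
    (h : x ∈ M.image Prod.fst) : gM M x ≤ N :=
  (hf.1 _ (gM_spec hf.2.1 h)).2.2

/-- endpoint of the orbit -/
def endM (N : ℕ) (M : Finset (ℕ × ℕ)) (x : ℕ) : ℕ := (gM M)^[N] x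

lemma iterate_mono {N : ℕ} {M : Finset (ℕ × ℕ)} (hf : Hfun N M) (x : ℕ) :
    Monotone fun m => (gM M)^[m] x := by
  apply monotone_nat_of_le_succ
  intro m
  rw [Function.iterate_succ_apply']
  exact le_gM hf _

lemma le_iterate {N : ℕ} {M : Finset (ℕ × ℕ)} (hf : Hfun N M) (x m : ℕ) :
    x ≤ (gM M)^[m] x := by
  have := iterate_mono hf x (Nat.zero_le m)
  simpa using this

lemma stab_aux {N : ℕ} {M : Finset (ℕ × ℕ)} (hf : Hfun N M) (x : ℕ) : ∀ m : ℕ,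
    gM M ((gM M)^[m] x) = (gM M)^[m] x ∨ (x + m ≤ (gM M)^[m] x ∧ (gM M)^[m] x ≤ N) := by
  intro m
  induction m with
  | zero =>
    by_cases h : gM M x = x
    · exact Or.inl h
    · right
      have hx : x ∈ M.image Prod.fst := by
        by_contra hc
        exact h (gM_of_notMem_fst hc)
      exact ⟨by simp, le_trans (le_of_lt (lt_gM_of_mem_fst hf hx)) (gM_le_N hf hx)⟩
  | succ m ih =>
    rcases ih with h | ⟨h1, h2⟩
    · left
      rw [Function.iterate_succ_apply', h, h]
    · set u := (gM M)^[m] x with hu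
      by_cases h : gM M u = u
      · left
        rw [Function.iterate_succ_apply', ← hu, h, h]
      · right
        have hx : u ∈ M.image Prod.fst := by
          by_contra hc
          exact h (gM_of_notMem_fst hc)
        have hlt := lt_gM_of_mem_fst hf hx
        rw [Function.iterate_succ_apply', ← hu]
        exact ⟨by omega, gM_le_N hf hx⟩

lemma gM_endM {N : ℕ} {M : Finset (ℕ × ℕ)} (hf : Hfun N M) (x : ℕ) :
    gM M (endM N M x) = endM N M x := by
  rcases stab_aux hf x N with h | ⟨h1, h2⟩
  · exact h
  · -- x + N ≤ (gM M)^[N] x ≤ N forces x = 0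
    have hx0 : x = 0 := by omega
    subst hx0
    have h0 : gM M 0 = 0 := by
      apply gM_of_notMem_fst
      intro hc
      obtain ⟨p, hp, hp0⟩ := mem_image.1 hc
      have := (hf.1 p hp).1
      omega
    have : ∀ m : ℕ, (gM M)^[m] 0 = 0 := fun m => Function.iterate_fixed h0 m
    simp [endM, this, h0]

lemma endM_gM {N : ℕ} {M : Finset (ℕ × ℕ)} (hf : Hfun N M) (x : ℕ) :
    endM N M (gM M x) = endM N M x := by
  rw [endM, ← Function.iterate_succ_apply, Function.iterate_succ_apply']
  exact gM_endM hf x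

lemma endM_iterate {N : ℕ} {M : Finset (ℕ × ℕ)} (hf : Hfun N M) (x : ℕ) (m : ℕ) :
    endM N M ((gM M)^[m] x) = endM N M x := by
  induction m with
  | zero => rfl
  | succ m ih => rw [Function.iterate_succ_apply', endM_gM hf, ih]

/-- merging lemma, auxiliary -/
lemma merge_aux {N : ℕ} {M : Finset (ℕ × ℕ)} (hf : Hfun N M) : ∀ (i x y : ℕ),
    (gM M)^[i] x = gM M y → y ∈ M.image Prod.fst →
    (∃ m, (gM M)^[m] x = y) ∨ (∃ m, (gM M)^[m] y = x) := by
  intro i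
  induction i with
  | zero =>
    intro x y h _
    exact Or.inr ⟨1, by simpa using h.symm⟩
  | succ i ih =>
    intro x y h hy
    rw [Function.iterate_succ_apply'] at h
    set u := (gM M)^[i] x with hu
    by_cases huy : u = y
    · exact Or.inl ⟨i, huy⟩
    by_cases hufst : u ∈ M.image Prod.fst
    · -- arcs (u, gM u) and (y, gM y) have the same second coordinate
      have h1 := gM_spec hf.2.1 hufst
      have h2 := gM_spec hf.2.1 hy
      have := hf.2.2 _ h1 _ h2 (by simpa using h)
      exact absurd (congrArg Prod.fst this) huy
    · have huu : u = gM M y := by rw [← gM_of_notMem_fst hufst]; exact h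
      exact ih x y (by rw [← hu]; exact huu) hy

lemma merge {N : ℕ} {M : Finset (ℕ × ℕ)} (hf : Hfun N M) : ∀ (i x y : ℕ),
    (gM M)^[i] x = (gM M)^[i] y →
    (∃ m, (gM M)^[m] x = y) ∨ (∃ m, (gM M)^[m] y = x) := by
  intro i
  induction i with
  | zero => intro x y h; exact Or.inl ⟨0, h⟩
  | succ i ih =>
    intro x y h
    rw [Function.iterate_succ_apply, Function.iterate_succ_apply] at h
    rcases ih (gM M x) (gM M y) h with ⟨m, hm⟩ | ⟨m, hm⟩
    · rw [← Function.iterate_succ_apply] at hm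
      by_cases hy : y ∈ M.image Prod.fst
      · exact merge_aux hf (m + 1) x y hm hy
      · rw [gM_of_notMem_fst hy] at hm
        exact Or.inl ⟨m + 1, hm⟩
    · rw [← Function.iterate_succ_apply] at hm
      by_cases hx : x ∈ M.image Prod.fst
      · rcases merge_aux hf (m + 1) y x hm hx with h' | h'
        · exact Or.inr h'
        · exact Or.inl h'
      · rw [gM_of_notMem_fst hx] at hm
        exact Or.inr ⟨m + 1, hm⟩

lemma comparable {N : ℕ} {M : Finset (ℕ × ℕ)} (hf : Hfun N M) {x y : ℕ}
    (h : endM N M x = endM N M y) :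
    (∃ m, (gM M)^[m] x = y) ∨ (∃ m, (gM M)^[m] y = x) :=
  merge hf N x y h


/-- equivalence classes of the orbit-end map -/
def classOf (N : ℕ) (M : Finset (ℕ × ℕ)) (x : ℕ) : Finset ℕ :=
  (Finset.Icc 1 N).filter fun y => endM N M y = endM N M x

lemma mem_classOf {N : ℕ} {M : Finset (ℕ × ℕ)} {x y : ℕ} :
    y ∈ classOf N M x ↔ y ∈ Finset.Icc 1 N ∧ endM N M y = endM N M x := by
  simp [classOf]

/-- the partition associated to a functional arc set -/
def QM (N : ℕ) (M : Finset (ℕ × ℕ)) : Finpartition (Finset.Icc (1 : ℕ) N) where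
  parts := (Finset.Icc 1 N).image fun x => classOf N M x
  supIndep := by
    rw [supIndep_iff_pairwiseDisjoint]
    intro a ha b hb hab
    simp only [coe_image, Set.mem_image, mem_coe] at ha hb
    obtain ⟨x, hx, rfl⟩ := ha
    obtain ⟨y, hy, rfl⟩ := hb
    intro c hca hcb z hz
    exfalso
    apply hab
    have h1 : endM N M x = endM N M y := by
      have hz1 := mem_classOf.1 (hca hz)
      have hz2 := mem_classOf.1 (hcb hz)
      rw [← hz1.2, hz2.2]
    ext w
    simp [mem_classOf, h1]
  sup_parts := by
    apply le_antisymm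
    · apply Finset.sup_le
      intro B hB
      simp only [mem_image] at hB
      obtain ⟨x, _, rfl⟩ := hB
      exact filter_subset _ _
    · intro x hx
      have : x ∈ classOf N M x := mem_classOf.2 ⟨hx, rfl⟩
      exact mem_sup.2 ⟨classOf N M x, mem_image_of_mem _ hx, this⟩
  bot_notMem := by
    simp only [bot_eq_empty, mem_image]
    rintro ⟨x, hx, hc⟩
    have : x ∈ classOf N M x := mem_classOf.2 ⟨hx, rfl⟩
    rw [hc] at this
    exact notMem_empty _ this

lemma mem_parts_QM {N : ℕ} {M : Finset (ℕ × ℕ)} {B : Finset ℕ} :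
    B ∈ (QM N M).parts ↔ ∃ x ∈ Finset.Icc 1 N, B = classOf N M x := by
  simp only [QM, mem_image]
  constructor
  · rintro ⟨x, hx, rfl⟩; exact ⟨x, hx, rfl⟩
  · rintro ⟨x, hx, rfl⟩; exact ⟨x, hx, rfl⟩

/-- arcs of the partition `QM N M` recover `M` -/
lemma spArcs_QM {N : ℕ} {M : Finset (ℕ × ℕ)} (hf : Hfun N M) :
    spArcs (QM N M) = M := by
  ext ⟨a, b⟩
  simp only [spArcs, mem_filter, mem_product]
  constructor
  · rintro ⟨⟨ha, hb⟩, hab, B, hB, haB, hbB, hbet⟩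
    obtain ⟨c, hc, rfl⟩ := mem_parts_QM.1 hB
    have hea : endM N M a = endM N M c := (mem_classOf.1 haB).2
    have heb : endM N M b = endM N M c := (mem_classOf.1 hbB).2
    have hcomp := comparable hf (hea.trans heb.symm)
    rcases hcomp with ⟨m, hm⟩ | ⟨m, hm⟩
    swap
    · have := le_iterate hf b m
      omega
    have hm1 : m ≠ 0 := by rintro rfl; simp at hm; omega
    have hafst : a ∈ M.image Prod.fst := by
      by_contra hc'
      rw [Function.iterate_fixed (gM_of_notMem_fst hc') m] at hm
      omega
    have harc := gM_spec hf.2.1 hafst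
    have hga : gM M a ≤ b := by
      calc gM M a = (gM M)^[1] a := rfl
      _ ≤ (gM M)^[m] a := iterate_mono hf a (by omega)
      _ = b := hm
    rcases eq_or_lt_of_le hga with he | hlt
    · rwa [he] at harc
    · exfalso
      have h1 : a < gM M a := lt_gM_of_mem_fst hf hafst
      have h2 : gM M a ∈ Finset.Icc 1 N := by
        have := hf.1 _ harc
        simp only [Finset.mem_Icc]
        omega
      have h3 : gM M a ∈ classOf N M c := by
        rw [mem_classOf]
        exact ⟨h2, (endM_gM hf a).trans hea⟩
      exact hbet _ h3 ⟨h1, hlt⟩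
  · intro hab
    have hb1 := hf.1 _ hab
    have ha : a ∈ Finset.Icc 1 N := by simp only [Finset.mem_Icc]; omega
    have hb : b ∈ Finset.Icc 1 N := by simp only [Finset.mem_Icc]; omega
    have hga : gM M a = b := gM_eq_of_mem hf.2.1 hab
    have heab : endM N M b = endM N M a := by rw [← hga]; exact endM_gM hf a
    refine ⟨⟨ha, hb⟩, hb1.2.1, classOf N M a, mem_parts_QM.2 ⟨a, ha, rfl⟩,
      mem_classOf.2 ⟨ha, rfl⟩, mem_classOf.2 ⟨hb, heab⟩, ?_⟩
    rintro x hx ⟨hax, hxb⟩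
    obtain ⟨hxIcc, hex⟩ := mem_classOf.1 hx
    rcases comparable hf hex with ⟨m, hm⟩ | ⟨m, hm⟩
    · have := le_iterate hf x m
      omega
    · have hm1 : m ≠ 0 := by rintro rfl; simp at hm; omega
      have : gM M a ≤ (gM M)^[m] a := by
        calc gM M a = (gM M)^[1] a := rfl
        _ ≤ (gM M)^[m] a := iterate_mono hf a (by omega)
      omega


lemma mem_spArcs {N : ℕ} {P : Finpartition (Finset.Icc (1 : ℕ) N)} {a b : ℕ} :
    (a, b) ∈ spArcs P ↔ a ∈ Finset.Icc 1 N ∧ b ∈ Finset.Icc 1 N ∧ a < b ∧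
      ∃ B ∈ P.parts, a ∈ B ∧ b ∈ B ∧ ∀ x ∈ B, ¬(a < x ∧ x < b) := by
  simp only [spArcs, mem_filter, mem_product]
  tauto

lemma hfun_spArcs {N : ℕ} (P : Finpartition (Finset.Icc (1 : ℕ) N)) :
    Hfun N (spArcs P) := by
  refine ⟨?_, ?_, ?_⟩
  · rintro ⟨a, b⟩ hp
    rw [mem_spArcs] at hp
    simp only [Finset.mem_Icc] at hp
    exact ⟨by omega, hp.2.2.1, by omega⟩
  · rintro ⟨a, b⟩ hp ⟨a', b'⟩ hq h1
    simp only at h1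
    subst h1
    rw [mem_spArcs] at hp hq
    obtain ⟨_, _, hab, B, hB, haB, hbB, hbet⟩ := hp
    obtain ⟨_, _, hab', B', hB', haB', hbB', hbet'⟩ := hq
    have hBB : B = B' := P.eq_of_mem_parts hB hB' haB haB'
    subst hBB
    rcases lt_trichotomy b b' with h | h | h
    · exact absurd ⟨hab, h⟩ (hbet' b hbB)
    · rw [h]
    · exact absurd ⟨hab', h⟩ (hbet b' hbB')
  · rintro ⟨a, b⟩ hp ⟨a', b'⟩ hq h1
    simp only at h1
    subst h1
    rw [mem_spArcs] at hp hq
    obtain ⟨_, _, hab, B, hB, haB, hbB, hbet⟩ := hp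
    obtain ⟨_, _, hab', B', hB', haB', hbB', hbet'⟩ := hq
    have hBB : B = B' := P.eq_of_mem_parts hB hB' hbB hbB'
    subst hBB
    rcases lt_trichotomy a a' with h | h | h
    · exact absurd ⟨h, hab'⟩ (hbet a' haB')
    · rw [h]
    · exact absurd ⟨h, hab⟩ (hbet' a haB)

section Blocks

variable {N : ℕ} {P : Finpartition (Finset.Icc (1 : ℕ) N)} {B : Finset ℕ}

/-- within a block, gM moves to the next element (or stays at the max) -/
lemma gM_mem_block (hB : B ∈ P.parts) {y : ℕ} (hy : y ∈ B) :
    gM (spArcs P) y ∈ B ∧ (gM (spArcs P) y = y ↔ ∀ z ∈ B, z ≤ y) := by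
  by_cases hex : ∃ z ∈ B, y < z
  · -- there is a next element
    set S := B.filter (fun z => y < z) with hS
    have hSne : S.Nonempty := by
      obtain ⟨z, hz, hyz⟩ := hex
      exact ⟨z, by simp [hS, hz, hyz]⟩
    set nb := S.min' hSne with hnb
    have hnbS : nb ∈ S := S.min'_mem hSne
    have hnbB : nb ∈ B := (mem_filter.1 hnbS).1
    have hynb : y < nb := (mem_filter.1 hnbS).2
    have harc : (y, nb) ∈ spArcs P := by
      rw [mem_spArcs]
      refine ⟨P.le hB hy, P.le hB hnbB, hynb, B, hB, hy, hnbB, ?_⟩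
      rintro x hx ⟨h1, h2⟩
      have : x ∈ S := by simp [hS, hx, h1]
      have := S.min'_le x this
      omega
    have hgy : gM (spArcs P) y = nb := gM_eq_of_mem (hfun_spArcs P).2.1 harc
    rw [hgy]
    constructor
    · exact hnbB
    · constructor
      · intro h; omega
      · intro h
        have := h nb hnbB
        omega
  · -- y is the max of the block
    push_neg at hex
    have hno : y ∉ (spArcs P).image Prod.fst := by
      intro hc
      have harc := gM_spec (hfun_spArcs P).2.1 hc
      rw [mem_spArcs] at harc
      obtain ⟨_, _, hlt, B', hB', hyB', hwB', _⟩ := harc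
      have : B' = B := P.eq_of_mem_parts hB' hB hyB' hy
      subst this
      have := hex _ hwB'
      omega
    rw [gM_of_notMem_fst hno]
    exact ⟨hy, fun _ => hex, fun _ => rfl⟩

lemma iterate_mem_block (hB : B ∈ P.parts) {y : ℕ} (hy : y ∈ B) (m : ℕ) :
    (gM (spArcs P))^[m] y ∈ B := by
  induction m with
  | zero => exact hy
  | succ m ih =>
    rw [Function.iterate_succ_apply']
    exact (gM_mem_block hB ih).1

lemma endM_eq_of_mem_block (hB : B ∈ P.parts) {x y : ℕ} (hx : x ∈ B) (hy : y ∈ B) :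
    endM N (spArcs P) y = endM N (spArcs P) x := by
  set M := spArcs P
  have hf := hfun_spArcs P
  have key : ∀ z ∈ B, gM M (endM N M z) = endM N M z ∧ endM N M z ∈ B := by
    intro z hz
    exact ⟨gM_endM hf z, iterate_mem_block hB hz N⟩
  obtain ⟨hfx, hmx⟩ := key x hx
  obtain ⟨hfy, hmy⟩ := key y hy
  -- both are fixed points in B, hence both are the max of B
  have h1 : ∀ z ∈ B, z ≤ endM N M x := ((gM_mem_block hB hmx).2).1 hfx
  have h2 : ∀ z ∈ B, z ≤ endM N M y := ((gM_mem_block hB hmy).2).1 hfy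
  have := h1 _ hmy
  have := h2 _ hmx
  omega

lemma classOf_eq_block (hB : B ∈ P.parts) {x : ℕ} (hx : x ∈ B) :
    classOf N (spArcs P) x = B := by
  ext y
  rw [mem_classOf]
  constructor
  · rintro ⟨hyIcc, hey⟩
    obtain ⟨C, hC, hyC⟩ := P.exists_mem hyIcc
    -- endM y is in C, endM x is in B, and they are equal
    have h1 : endM N (spArcs P) y ∈ C := iterate_mem_block hC hyC N
    have h2 : endM N (spArcs P) x ∈ B := iterate_mem_block hB hx N
    rw [hey] at h1
    have : C = B := P.eq_of_mem_parts hC hB h1 h2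
    subst this
    exact hyC
  · intro hyB
    exact ⟨P.le hB hyB, endM_eq_of_mem_block hB hx hyB⟩

lemma QM_spArcs (P : Finpartition (Finset.Icc (1 : ℕ) N)) :
    QM N (spArcs P) = P := by
  apply Finpartition.ext
  ext B
  rw [mem_parts_QM]
  constructor
  · rintro ⟨x, hx, rfl⟩
    obtain ⟨C, hC, hxC⟩ := P.exists_mem hx
    rw [classOf_eq_block hC hxC]
    exact hC
  · intro hB
    obtain ⟨x, hx⟩ := P.nonempty_of_mem_parts hB
    exact ⟨x, P.le hB hx, (classOf_eq_block hB hx).symm⟩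

end Blocks


section Vtype

variable {N : ℕ} {P : Finpartition (Finset.Icc (1 : ℕ) N)} {i : ℕ}

lemma vtype_opener_iff :
    vtype P i = VType.opener ↔ i ∈ (spArcs P).image Prod.fst ∧ i ∉ (spArcs P).image Prod.snd := by
  unfold vtype; split_ifs with h1 h2 h2 <;> simp_all

lemma vtype_closer_iff :
    vtype P i = VType.closer ↔ i ∉ (spArcs P).image Prod.fst ∧ i ∈ (spArcs P).image Prod.snd := by
  unfold vtype; split_ifs with h1 h2 h2 <;> simp_all

lemma vtype_transitory_iff :
    vtype P i = VType.transitory ↔ i ∈ (spArcs P).image Prod.fst ∧ i ∈ (spArcs P).image Prod.snd := by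
  unfold vtype; split_ifs with h1 h2 h2 <;> simp_all

end Vtype

section Specific

variable (n k j : ℕ)

def Nn : ℕ := 2 * (n + k + j) + 1

def Lset : Finset ℕ := Finset.Icc 1 (n + k + 1) ∪ Finset.Icc (n + 2 * k + 2) (n + 2 * k + j + 1)

def Rset : Finset ℕ :=
  Finset.Icc (n + k + 1) (n + 2 * k + 1) ∪ Finset.Icc (n + 2 * k + j + 2) (Nn n k j)

def Pattern (P : Finpartition (Finset.Icc (1 : ℕ) (Nn n k j))) : Prop :=
  (∀ i ∈ Finset.Icc (1 : ℕ) (2 * (n + k + j) + 1), vtype P i ≠ VType.fixedpt) ∧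
  (∀ i ∈ Finset.Icc (1 : ℕ) (n + k), vtype P i = VType.opener) ∧
  vtype P (n + k + 1) = VType.transitory ∧
  (∀ i ∈ Finset.Icc (n + k + 2) (n + 2 * k + 1), vtype P i = VType.closer) ∧
  (∀ i ∈ Finset.Icc (n + 2 * k + 2) (n + 2 * k + j + 1), vtype P i = VType.opener) ∧
  (∀ i ∈ Finset.Icc (n + 2 * k + j + 2) (2 * (n + k + j) + 1), vtype P i = VType.closer)

variable {n k j}

lemma image_fst_subset {P : Finpartition (Finset.Icc (1 : ℕ) (Nn n k j))} :
    ∀ x ∈ (spArcs P).image Prod.fst, 1 ≤ x ∧ x + 1 ≤ Nn n k j := by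
  intro x hx
  obtain ⟨p, hp, rfl⟩ := mem_image.1 hx
  have := (hfun_spArcs P).1 p hp
  omega

lemma image_snd_subset {P : Finpartition (Finset.Icc (1 : ℕ) (Nn n k j))} :
    ∀ x ∈ (spArcs P).image Prod.snd, 2 ≤ x ∧ x ≤ Nn n k j := by
  intro x hx
  obtain ⟨p, hp, rfl⟩ := mem_image.1 hx
  have := (hfun_spArcs P).1 p hp
  omega

lemma pattern_iff {P : Finpartition (Finset.Icc (1 : ℕ) (Nn n k j))} :
    Pattern n k j P ↔
      (spArcs P).image Prod.fst = Lset n k j ∧ (spArcs P).image Prod.snd = Rset n k j := by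
  constructor
  · rintro ⟨h0, h1, h2, h3, h4, h5⟩
    have key : ∀ i, 1 ≤ i → i ≤ Nn n k j →
        (i ∈ (spArcs P).image Prod.fst ↔ i ∈ Lset n k j) ∧
        (i ∈ (spArcs P).image Prod.snd ↔ i ∈ Rset n k j) := by
      intro i hi1 hi2
      have hi2' : i ≤ 2*(n+k+j)+1 := by simpa [Nn] using hi2
      have hiL : i ∈ Lset n k j ↔ (i ≤ n + k + 1 ∨ (n + 2*k + 2 ≤ i ∧ i ≤ n + 2*k + j + 1)) := by
        simp [Lset, Finset.mem_Icc, Finset.mem_union]; omega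
      have hiR : i ∈ Rset n k j ↔
          ((n + k + 1 ≤ i ∧ i ≤ n + 2*k + 1) ∨ n + 2*k + j + 2 ≤ i) := by
        simp [Rset, Nn, Finset.mem_Icc, Finset.mem_union]; omega
      by_cases c1 : i ≤ n + k
      · have := vtype_opener_iff.1 (h1 i (by simp [Finset.mem_Icc]; omega))
        rw [hiL, hiR]
        constructor
        · constructor
          · intro _; omega
          · intro _; exact this.1
        · constructor
          · intro h; exact absurd h this.2
          · intro h; omega
      by_cases c2 : i = n + k + 1
      · subst c2
        have := vtype_transitory_iff.1 h2
        rw [hiL, hiR]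
        constructor <;> constructor <;> intro h
        · omega
        · exact this.1
        · omega
        · exact this.2
      by_cases c3 : i ≤ n + 2*k + 1
      · have := vtype_closer_iff.1 (h3 i (by simp [Finset.mem_Icc]; omega))
        rw [hiL, hiR]
        constructor <;> constructor <;> intro h
        · exact absurd h this.1
        · omega
        · omega
        · exact this.2
      by_cases c4 : i ≤ n + 2*k + j + 1
      · have := vtype_opener_iff.1 (h4 i (by simp [Finset.mem_Icc]; omega))
        rw [hiL, hiR]
        constructor <;> constructor <;> intro h
        · omega
        · exact this.1
        · exact absurd h this.2
        · omega
      · have := vtype_closer_iff.1 (h5 i (by simp [Finset.mem_Icc]; omega))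
        rw [hiL, hiR]
        constructor <;> constructor <;> intro h
        · exact absurd h this.1
        · omega
        · omega
        · exact this.2
    constructor
    · ext i
      by_cases hi : 1 ≤ i ∧ i ≤ Nn n k j
      · exact (key i hi.1 hi.2).1
      · constructor
        · intro h; have := image_fst_subset _ h; omega
        · intro h
          exfalso
          simp only [Lset, Finset.mem_union, Finset.mem_Icc, Nn] at h hi
          omega
    · ext i
      by_cases hi : 1 ≤ i ∧ i ≤ Nn n k j
      · exact (key i hi.1 hi.2).2
      · constructor
        · intro h; have := image_snd_subset _ h; omega
        · intro h
          exfalso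
          simp only [Rset, Finset.mem_union, Finset.mem_Icc, Nn] at h hi
          omega
  · rintro ⟨hL, hR⟩
    have memL : ∀ i, i ∈ (spArcs P).image Prod.fst ↔
        (i ≤ n + k + 1 ∧ 1 ≤ i) ∨ (n + 2*k + 2 ≤ i ∧ i ≤ n + 2*k + j + 1) := by
      intro i
      rw [hL]
      simp [Lset, Finset.mem_Icc, Finset.mem_union]
      omega
    have memR : ∀ i, i ∈ (spArcs P).image Prod.snd ↔
        ((n + k + 1 ≤ i ∧ i ≤ n + 2*k + 1) ∨ (n + 2*k + j + 2 ≤ i ∧ i ≤ Nn n k j)) := by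
      intro i
      rw [hR]
      simp [Rset, Finset.mem_Icc, Finset.mem_union]
    refine ⟨?_, ?_, ?_, ?_, ?_, ?_⟩
    · intro i hi
      simp only [Finset.mem_Icc] at hi
      unfold vtype
      split_ifs with a1 a2 a2 <;> try simp
      rw [memL] at a1
      rw [memR] at a2
      simp only [Nn] at *
      omega
    · intro i hi
      simp only [Finset.mem_Icc] at hi
      rw [vtype_opener_iff, memL, memR]
      simp only [Nn]
      omega
    · rw [vtype_transitory_iff, memL, memR]
      simp only [Nn]
      omega
    · intro i hi
      simp only [Finset.mem_Icc] at hi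
      rw [vtype_closer_iff, memL, memR]
      simp only [Nn]
      omega
    · intro i hi
      simp only [Finset.mem_Icc] at hi
      rw [vtype_opener_iff, memL, memR]
      simp only [Nn]
      omega
    · intro i hi
      simp only [Finset.mem_Icc] at hi
      rw [vtype_closer_iff, memL, memR]
      simp only [Nn]
      omega

end Specific


section Count

instance (N : ℕ) (M : Finset (ℕ × ℕ)) : Decidable (Hfun N M) := by
  unfold Hfun; infer_instance

variable (n k j : ℕ)

def Aset : Finset (Finset (ℕ × ℕ)) :=
  ((Finset.Icc 1 (Nn n k j) ×ˢ Finset.Icc 1 (Nn n k j)).powerset).filter fun M =>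
    Hfun (Nn n k j) M ∧ M.image Prod.fst = Lset n k j ∧ M.image Prod.snd = Rset n k j

variable {n k j}

lemma mem_Aset {M : Finset (ℕ × ℕ)} :
    M ∈ Aset n k j ↔
      Hfun (Nn n k j) M ∧ M.image Prod.fst = Lset n k j ∧ M.image Prod.snd = Rset n k j := by
  simp only [Aset, mem_filter, mem_powerset, and_iff_right_iff_imp]
  rintro ⟨hf, _, _⟩ p hp
  have := hf.1 p hp
  simp only [mem_product, Finset.mem_Icc]
  omega

noncomputable def patternEquiv :
    {P : Finpartition (Finset.Icc (1 : ℕ) (Nn n k j)) // Pattern n k j P} ≃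
    {M : Finset (ℕ × ℕ) // M ∈ Aset n k j} where
  toFun P := ⟨spArcs P.1, by
    rw [mem_Aset]
    exact ⟨hfun_spArcs _, (pattern_iff.1 P.2).1, (pattern_iff.1 P.2).2⟩⟩
  invFun M := ⟨QM (Nn n k j) M.1, by
    have h := mem_Aset.1 M.2
    rw [pattern_iff, spArcs_QM h.1]
    exact h.2⟩
  left_inv P := Subtype.ext (QM_spArcs P.1)
  right_inv M := Subtype.ext (spArcs_QM (mem_Aset.1 M.2).1)

lemma card_eq_Aset :
    Nat.card {P : Finpartition (Finset.Icc (1 : ℕ) (Nn n k j)) // Pattern n k j P} =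
      (Aset n k j).card := by
  rw [Nat.card_congr patternEquiv]
  exact Nat.card_eq_finsetCard _

end Count


section InjGraphs

def InjGraphs (X Y : Finset ℕ) : Finset (Finset (ℕ × ℕ)) :=
  (X ×ˢ Y).powerset.filter fun M =>
    M.image Prod.fst = X ∧ (∀ p ∈ M, ∀ q ∈ M, p.1 = q.1 → p = q) ∧
    (∀ p ∈ M, ∀ q ∈ M, p.2 = q.2 → p = q)

lemma mem_injGraphs {X Y : Finset ℕ} {M : Finset (ℕ × ℕ)} :
    M ∈ InjGraphs X Y ↔ M ⊆ X ×ˢ Y ∧ M.image Prod.fst = X ∧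
      (∀ p ∈ M, ∀ q ∈ M, p.1 = q.1 → p = q) ∧
      (∀ p ∈ M, ∀ q ∈ M, p.2 = q.2 → p = q) := by
  simp [InjGraphs, and_assoc]

lemma card_injGraphs : ∀ (X Y : Finset ℕ),
    (InjGraphs X Y).card = Y.card.descFactorial X.card := by
  intro X
  induction X using Finset.induction_on with
  | empty =>
    intro Y
    have h : InjGraphs ∅ Y = {∅} := by
      ext M
      rw [mem_injGraphs]
      simp only [Finset.empty_product, Finset.subset_empty, mem_singleton]
      constructor
      · rintro ⟨rfl, _⟩; rfl
      · rintro rfl; simp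
    rw [h]
    simp
  | @insert a X' ha ih =>
    intro Y
    have hmaps : ∀ M ∈ InjGraphs (insert a X') Y, gM M a ∈ Y := by
      intro M hM
      rw [mem_injGraphs] at hM
      have haf : a ∈ M.image Prod.fst := hM.2.1 ▸ mem_insert_self a X'
      have := gM_spec hM.2.2.1 haf
      exact (mem_product.1 (hM.1 this)).2
    rw [Finset.card_eq_sum_card_fiberwise hmaps]
    have hfib : ∀ y ∈ Y,
        ((InjGraphs (insert a X') Y).filter (fun M => gM M a = y)).card =
          (InjGraphs X' (Y.erase y)).card := by
      intro y hy
      apply Finset.card_bij' (fun M _ => M.erase (a, y)) (fun D _ => insert (a, y) D)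
      · -- left inverse
        intro M hM
        simp only [mem_filter] at hM
        obtain ⟨hM, hgy⟩ := hM
        rw [mem_injGraphs] at hM
        have haf : a ∈ M.image Prod.fst := hM.2.1 ▸ mem_insert_self a X'
        have hayM : (a, y) ∈ M := by
          have := gM_spec hM.2.2.1 haf
          rwa [hgy] at this
        exact Finset.insert_erase hayM
      · -- right inverse
        intro D hD
        rw [mem_injGraphs] at hD
        apply Finset.erase_insert
        intro hmem
        have : (a, y).1 ∈ X' := (mem_product.1 (hD.1 hmem)).1
        exact ha this
      · -- i maps into t
        intro M hM
        simp only [mem_filter] at hM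
        obtain ⟨hM, hgy⟩ := hM
        rw [mem_injGraphs] at hM
        obtain ⟨hsub, himg, hfun, hcof⟩ := hM
        have haf : a ∈ M.image Prod.fst := himg ▸ mem_insert_self a X'
        have hayM : (a, y) ∈ M := by
          have := gM_spec hfun haf
          rwa [hgy] at this
        rw [mem_injGraphs]
        refine ⟨?_, ?_, ?_, ?_⟩
        · intro p hp
          obtain ⟨hpn, hpM⟩ := Finset.mem_erase.1 hp
          have hpXY := mem_product.1 (hsub hpM)
          have hp1 : p.1 ∈ X' := by
            have : p.1 ∈ insert a X' := himg ▸ mem_image_of_mem _ hpM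
            rcases mem_insert.1 this with h | h
            · exact absurd (hfun p hpM (a, y) hayM h) hpn
            · exact h
          have hp2 : p.2 ∈ Y.erase y := by
            rw [Finset.mem_erase]
            refine ⟨?_, hpXY.2⟩
            intro h
            exact hpn (hcof p hpM (a, y) hayM h)
          exact mem_product.2 ⟨hp1, hp2⟩
        · apply Finset.Subset.antisymm
          · intro x hx
            obtain ⟨p, hp, rfl⟩ := mem_image.1 hx
            obtain ⟨hpn, hpM⟩ := Finset.mem_erase.1 hp
            have : p.1 ∈ insert a X' := himg ▸ mem_image_of_mem _ hpM
            rcases mem_insert.1 this with h | h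
            · exact absurd (hfun p hpM (a, y) hayM h) hpn
            · exact h
          · intro x hx
            have : x ∈ M.image Prod.fst := himg ▸ mem_insert_of_mem hx
            obtain ⟨p, hp, rfl⟩ := mem_image.1 this
            refine mem_image_of_mem _ (Finset.mem_erase.2 ⟨?_, hp⟩)
            rintro rfl
            exact ha hx
        · intro p hp q hq
          exact hfun p (Finset.mem_erase.1 hp).2 q (Finset.mem_erase.1 hq).2
        · intro p hp q hq
          exact hcof p (Finset.mem_erase.1 hp).2 q (Finset.mem_erase.1 hq).2
      · -- j maps into s
        intro D hD
        rw [mem_injGraphs] at hD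
        obtain ⟨hsub, himg, hfun, hcof⟩ := hD
        have hanotin : ∀ p ∈ D, p.1 ≠ a := by
          intro p hp h
          have : p.1 ∈ X' := (mem_product.1 (hsub hp)).1
          rw [h] at this
          exact ha this
        have hfun' : ∀ p ∈ insert (a, y) D, ∀ q ∈ insert (a, y) D, p.1 = q.1 → p = q := by
          intro p hp q hq hpq
          rcases Finset.mem_insert.1 hp with rfl | hp <;>
            rcases Finset.mem_insert.1 hq with rfl | hq
          · rfl
          · exact absurd hpq.symm (hanotin q hq)
          · exact absurd hpq (hanotin p hp)
          · exact hfun p hp q hq hpq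
        rw [mem_filter, mem_injGraphs]
        refine ⟨⟨?_, ?_, hfun', ?_⟩, ?_⟩
        · intro p hp
          rcases Finset.mem_insert.1 hp with rfl | hp
          · exact mem_product.2 ⟨mem_insert_self a X', hy⟩
          · have := mem_product.1 (hsub hp)
            exact mem_product.2 ⟨mem_insert_of_mem this.1, Finset.mem_of_mem_erase this.2⟩
        · rw [Finset.image_insert, himg]
        · intro p hp q hq hpq
          rcases Finset.mem_insert.1 hp with rfl | hp <;>
            rcases Finset.mem_insert.1 hq with rfl | hq
          · rfl
          · exact absurd ((Finset.mem_erase.1 (mem_product.1 (hsub hq)).2).1 hpq.symm).elim id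
          · exact absurd ((Finset.mem_erase.1 (mem_product.1 (hsub hp)).2).1 hpq).elim id
          · exact hcof p hp q hq hpq
        · exact gM_eq_of_mem hfun' (Finset.mem_insert_self _ _)
    rw [Finset.sum_congr rfl hfib]
    have : ∀ y ∈ Y, (InjGraphs X' (Y.erase y)).card = (Y.card - 1).descFactorial X'.card := by
      intro y hy
      rw [ih, Finset.card_erase_of_mem hy]
    rw [Finset.sum_congr rfl this, Finset.sum_const, smul_eq_mul,
      Finset.card_insert_of_notMem ha]
    rcases Nat.eq_zero_or_pos Y.card with h0 | hpos
    · rw [h0]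
      simp
    · obtain ⟨m, hm⟩ : ∃ m, Y.card = m + 1 := ⟨Y.card - 1, by omega⟩
      rw [hm, Nat.succ_descFactorial_succ]
      simp

end InjGraphs


section Decomp

/-- predecessor along the arc set -/
def preM (M : Finset (ℕ × ℕ)) (y : ℕ) : ℕ :=
  ((M.filter fun p => p.2 = y).image Prod.fst).min.getD y

lemma preM_eq_of_mem {M : Finset (ℕ × ℕ)}
    (h3 : ∀ p ∈ M, ∀ q ∈ M, p.2 = q.2 → p = q) {x y : ℕ} (hxy : (x, y) ∈ M) :
    preM M y = x := by
  have : M.filter (fun p => p.2 = y) = {(x, y)} := by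
    ext p
    simp only [mem_filter, mem_singleton]
    constructor
    · rintro ⟨hp, rfl⟩
      exact h3 p hp (x, p.2) hxy rfl
    · rintro rfl; exact ⟨hxy, rfl⟩
  rw [preM, this]
  rfl

variable (n k j : ℕ)

def Eset : Finset (Finset (ℕ × ℕ)) :=
  ((Finset.Icc 1 (n + k + 1)) ×ˢ (Finset.Icc (n + k + 1) (n + 2 * k + 1))).powerset.filter
    fun E => E.image Prod.snd = Finset.Icc (n + k + 1) (n + 2 * k + 1) ∧
      (∀ p ∈ E, ∀ q ∈ E, p.1 = q.1 → p = q) ∧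
      (∀ p ∈ E, ∀ q ∈ E, p.2 = q.2 → p = q) ∧
      (∀ p ∈ E, p.1 < p.2)

variable {n k j}

lemma mem_Eset {E : Finset (ℕ × ℕ)} :
    E ∈ Eset n k ↔ E ⊆ (Finset.Icc 1 (n + k + 1)) ×ˢ (Finset.Icc (n + k + 1) (n + 2 * k + 1)) ∧
      E.image Prod.snd = Finset.Icc (n + k + 1) (n + 2 * k + 1) ∧
      (∀ p ∈ E, ∀ q ∈ E, p.1 = q.1 → p = q) ∧
      (∀ p ∈ E, ∀ q ∈ E, p.2 = q.2 → p = q) ∧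
      (∀ p ∈ E, p.1 < p.2) := by
  simp [Eset, and_assoc]

lemma card_Eset : (Eset n k).card = (n + k) * (n + k).descFactorial k := by
  have hmaps : ∀ E ∈ Eset n k, preM E (n + k + 1) ∈ Finset.Icc 1 (n + k) := by
    intro E hE
    rw [mem_Eset] at hE
    obtain ⟨hsub, himg, hfun, hcof, hinc⟩ := hE
    have : n + k + 1 ∈ E.image Prod.snd := by
      rw [himg]; simp only [Finset.mem_Icc]; omega
    obtain ⟨p, hp, hp2⟩ := mem_image.1 this
    have hpre : preM E (n + k + 1) = p.1 := by
      apply preM_eq_of_mem hcof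
      rw [← hp2]
      exact hp
    have h1 := mem_product.1 (hsub hp)
    simp only [Finset.mem_Icc] at h1 ⊢
    have := hinc p hp
    omega
  rw [Finset.card_eq_sum_card_fiberwise hmaps]
  have hfib : ∀ b ∈ Finset.Icc 1 (n + k),
      ((Eset n k).filter (fun E => preM E (n + k + 1) = b)).card =
        (InjGraphs (Finset.Icc (n + k + 2) (n + 2 * k + 1))
          ((Finset.Icc 1 (n + k + 1)).erase b)).card := by
    intro b hb
    simp only [Finset.mem_Icc] at hb
    apply Finset.card_bij' (fun E _ => (E.erase (b, n + k + 1)).image Prod.swap)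
      (fun D _ => insert (b, n + k + 1) (D.image Prod.swap))
    · -- left inverse
      intro E hE
      simp only [mem_filter] at hE
      obtain ⟨hE, hpre⟩ := hE
      rw [mem_Eset] at hE
      obtain ⟨hsub, himg, hfun, hcof, hinc⟩ := hE
      have hbt : (b, n + k + 1) ∈ E := by
        have : n + k + 1 ∈ E.image Prod.snd := by
          rw [himg]; simp only [Finset.mem_Icc]; omega
        obtain ⟨p, hp, hp2⟩ := mem_image.1 this
        have : preM E (n + k + 1) = p.1 := by
          apply preM_eq_of_mem hcof; rw [← hp2]; exact hp
        have hpb : p = (b, n + k + 1) := by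
          rw [this] at hpre
          rw [← hpre, ← hp2]
        rwa [hpb] at hp
      rw [Finset.image_image]
      have : (Prod.swap ∘ Prod.swap : ℕ × ℕ → ℕ × ℕ) = id := by
        funext p; simp
      rw [this, Finset.image_id, Finset.insert_erase hbt]
    · -- right inverse
      intro D hD
      rw [mem_injGraphs] at hD
      have hnot : (b, n + k + 1) ∉ D.image Prod.swap := by
        intro hc
        obtain ⟨q, hq, hq'⟩ := mem_image.1 hc
        have : q.1 ∈ Finset.Icc (n + k + 2) (n + 2 * k + 1) := (mem_product.1 (hD.1 hq)).1
        simp only [Finset.mem_Icc] at this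
        have : q.1 = n + k + 1 := by
          have := congrArg Prod.snd hq'
          simpa using this
        omega
      rw [Finset.erase_insert hnot, Finset.image_image]
      have : (Prod.swap ∘ Prod.swap : ℕ × ℕ → ℕ × ℕ) = id := by
        funext p; simp
      rw [this, Finset.image_id]
    · -- i maps into t
      intro E hE
      simp only [mem_filter] at hE
      obtain ⟨hE, hpre⟩ := hE
      rw [mem_Eset] at hE
      obtain ⟨hsub, himg, hfun, hcof, hinc⟩ := hE
      have hbt : (b, n + k + 1) ∈ E := by
        have : n + k + 1 ∈ E.image Prod.snd := by
          rw [himg]; simp only [Finset.mem_Icc]; omega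
        obtain ⟨p, hp, hp2⟩ := mem_image.1 this
        have : preM E (n + k + 1) = p.1 := by
          apply preM_eq_of_mem hcof; rw [← hp2]; exact hp
        have hpb : p = (b, n + k + 1) := by
          rw [this] at hpre
          rw [← hpre, ← hp2]
        rwa [hpb] at hp
      rw [mem_injGraphs]
      refine ⟨?_, ?_, ?_, ?_⟩
      · intro q hq
        obtain ⟨p, hp, rfl⟩ := mem_image.1 hq
        obtain ⟨hpn, hpE⟩ := Finset.mem_erase.1 hp
        have h1 := mem_product.1 (hsub hpE)
        simp only [Finset.mem_Icc] at h1
        have hp2t : p.2 ≠ n + k + 1 := by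
          intro h
          exact hpn (hcof p hpE (b, n + k + 1) hbt h)
        have hp1b : p.1 ≠ b := by
          intro h
          exact hpn (hfun p hpE (b, n + k + 1) hbt h)
        refine mem_product.2 ⟨?_, ?_⟩
        · simp only [Prod.fst_swap, Finset.mem_Icc]; omega
        · simp only [Prod.snd_swap]
          exact Finset.mem_erase.2 ⟨hp1b, by simp only [Finset.mem_Icc]; omega⟩
      · apply Finset.Subset.antisymm
        · intro y hy
          obtain ⟨q, hq, rfl⟩ := mem_image.1 hy
          obtain ⟨p, hp, rfl⟩ := mem_image.1 hq
          obtain ⟨hpn, hpE⟩ := Finset.mem_erase.1 hp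
          have h1 := mem_product.1 (hsub hpE)
          simp only [Finset.mem_Icc] at h1
          have hp2t : p.2 ≠ n + k + 1 := by
            intro h
            exact hpn (hcof p hpE (b, n + k + 1) hbt h)
          simp only [Prod.fst_swap, Finset.mem_Icc]
          omega
        · intro y hy
          simp only [Finset.mem_Icc] at hy
          have : y ∈ E.image Prod.snd := by
            rw [himg]; simp only [Finset.mem_Icc]; omega
          obtain ⟨p, hp, hp2⟩ := mem_image.1 this
          have hpne : p ≠ (b, n + k + 1) := by
            intro h
            rw [h] at hp2
            simp at hp2
            omega
          refine mem_image.2 ⟨p.swap, ?_, by simp [hp2]⟩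
          exact mem_image_of_mem _ (Finset.mem_erase.2 ⟨hpne, hp⟩)
      · intro q hq q' hq' hqq
        obtain ⟨p, hp, rfl⟩ := mem_image.1 hq
        obtain ⟨p', hp', rfl⟩ := mem_image.1 hq'
        simp only [Prod.fst_swap] at hqq
        have := hcof p (Finset.mem_erase.1 hp).2 p' (Finset.mem_erase.1 hp').2 hqq
        rw [this]
      · intro q hq q' hq' hqq
        obtain ⟨p, hp, rfl⟩ := mem_image.1 hq
        obtain ⟨p', hp', rfl⟩ := mem_image.1 hq'
        simp only [Prod.snd_swap] at hqq
        have := hfun p (Finset.mem_erase.1 hp).2 p' (Finset.mem_erase.1 hp').2 hqq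
        rw [this]
    · -- j maps into s
      intro D hD
      rw [mem_injGraphs] at hD
      obtain ⟨hsub, himg, hfun, hcof⟩ := hD
      have hswapmem : ∀ q ∈ D, (q.2 ∈ (Finset.Icc 1 (n+k+1)).erase b) ∧
          q.1 ∈ Finset.Icc (n + k + 2) (n + 2 * k + 1) := by
        intro q hq
        have := mem_product.1 (hsub hq)
        exact ⟨this.2, this.1⟩
      have hEfun : ∀ p ∈ insert (b, n+k+1) (D.image Prod.swap),
          ∀ q ∈ insert (b, n+k+1) (D.image Prod.swap), p.1 = q.1 → p = q := by
        intro p hp q hq hpq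
        rcases Finset.mem_insert.1 hp with rfl | hp <;>
          rcases Finset.mem_insert.1 hq with rfl | hq
        · rfl
        · exfalso
          obtain ⟨q', hq', rfl⟩ := mem_image.1 hq
          have := (Finset.mem_erase.1 (hswapmem q' hq').1).1
          simp only [Prod.fst_swap] at hpq
          exact this hpq.symm
        · exfalso
          obtain ⟨p', hp', rfl⟩ := mem_image.1 hp
          have := (Finset.mem_erase.1 (hswapmem p' hp').1).1
          simp only [Prod.fst_swap] at hpq
          exact this hpq
        · obtain ⟨p', hp', rfl⟩ := mem_image.1 hp
          obtain ⟨q', hq', rfl⟩ := mem_image.1 hq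
          simp only [Prod.fst_swap] at hpq
          rw [hcof p' hp' q' hq' hpq]
      have hEcof : ∀ p ∈ insert (b, n+k+1) (D.image Prod.swap),
          ∀ q ∈ insert (b, n+k+1) (D.image Prod.swap), p.2 = q.2 → p = q := by
        intro p hp q hq hpq
        rcases Finset.mem_insert.1 hp with rfl | hp <;>
          rcases Finset.mem_insert.1 hq with rfl | hq
        · rfl
        · exfalso
          obtain ⟨q', hq', rfl⟩ := mem_image.1 hq
          have := Finset.mem_Icc.1 (hswapmem q' hq').2
          simp only [Prod.snd_swap] at hpq
          omega
        · exfalso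
          obtain ⟨p', hp', rfl⟩ := mem_image.1 hp
          have := Finset.mem_Icc.1 (hswapmem p' hp').2
          simp only [Prod.snd_swap] at hpq
          omega
        · obtain ⟨p', hp', rfl⟩ := mem_image.1 hp
          obtain ⟨q', hq', rfl⟩ := mem_image.1 hq
          simp only [Prod.snd_swap] at hpq
          rw [hfun p' hp' q' hq' hpq]
      rw [mem_filter, mem_Eset]
      refine ⟨⟨?_, ?_, hEfun, hEcof, ?_⟩, ?_⟩
      · intro p hp
        rcases Finset.mem_insert.1 hp with rfl | hp
        · refine mem_product.2 ⟨?_, ?_⟩ <;> simp only [Finset.mem_Icc] <;> omega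
        · obtain ⟨q, hq, rfl⟩ := mem_image.1 hp
          have h1 := Finset.mem_Icc.1 (hswapmem q hq).2
          have h2 := Finset.mem_Icc.1 (Finset.mem_of_mem_erase (hswapmem q hq).1)
          refine mem_product.2 ⟨?_, ?_⟩ <;> simp only [Prod.fst_swap, Prod.snd_swap,
            Finset.mem_Icc] <;> omega
      · rw [Finset.image_insert]
        have : (D.image Prod.swap).image Prod.snd = D.image Prod.fst := by
          rw [Finset.image_image]
          rfl
        rw [this, himg]
        ext y
        simp only [Finset.mem_insert, Finset.mem_Icc]
        omega
      · intro p hp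
        rcases Finset.mem_insert.1 hp with rfl | hp
        · simp; omega
        · obtain ⟨q, hq, rfl⟩ := mem_image.1 hp
          have h1 := Finset.mem_Icc.1 (hswapmem q hq).2
          have h2 := Finset.mem_Icc.1 (Finset.mem_of_mem_erase (hswapmem q hq).1)
          simp only [Prod.fst_swap, Prod.snd_swap]
          omega
      · exact preM_eq_of_mem hEcof (Finset.mem_insert_self _ _)
  rw [Finset.sum_congr rfl hfib]
  have hconst : ∀ b ∈ Finset.Icc 1 (n + k),
      (InjGraphs (Finset.Icc (n + k + 2) (n + 2 * k + 1))
        ((Finset.Icc 1 (n + k + 1)).erase b)).card = (n + k).descFactorial k := by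
    intro b hb
    rw [card_injGraphs]
    have h1 : ((Finset.Icc 1 (n + k + 1)).erase b).card = n + k := by
      rw [Finset.card_erase_of_mem (by simp only [Finset.mem_Icc] at hb ⊢; omega)]
      rw [Nat.card_Icc]
      omega
    have h2 : (Finset.Icc (n + k + 2) (n + 2 * k + 1)).card = k := by
      rw [Nat.card_Icc]
      omega
    rw [h1, h2]
  rw [Finset.sum_congr rfl hconst, Finset.sum_const, smul_eq_mul, Nat.card_Icc]
  congr 1


lemma card_image_fst {E : Finset (ℕ × ℕ)} (hfun : ∀ p ∈ E, ∀ q ∈ E, p.1 = q.1 → p = q) :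
    (E.image Prod.fst).card = E.card :=
  Finset.card_image_of_injOn fun p hp q hq h => hfun p hp q hq h

lemma card_image_snd {E : Finset (ℕ × ℕ)} (hcof : ∀ p ∈ E, ∀ q ∈ E, p.2 = q.2 → p = q) :
    (E.image Prod.snd).card = E.card :=
  Finset.card_image_of_injOn fun p hp q hq h => hcof p hp q hq h

lemma imE_subset_Lset {E : Finset (ℕ × ℕ)} (hE : E ∈ Eset n k) :
    E.image Prod.fst ⊆ Lset n k j := by
  intro x hx
  obtain ⟨p, hp, rfl⟩ := mem_image.1 hx
  have := mem_product.1 ((mem_Eset.1 hE).1 hp)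
  simp only [Finset.mem_Icc] at this
  simp only [Lset, Finset.mem_union, Finset.mem_Icc]
  omega

lemma card_Lset : (Lset n k j).card = n + k + 1 + j := by
  rw [Lset, Finset.card_union_of_disjoint, Nat.card_Icc, Nat.card_Icc]
  · omega
  · rw [Finset.disjoint_left]
    intro a ha hb
    simp only [Finset.mem_Icc] at ha hb
    omega

lemma card_Lset_sdiff {E : Finset (ℕ × ℕ)} (hE : E ∈ Eset n k) :
    (Lset n k j \ E.image Prod.fst).card = n + j := by
  rw [Finset.card_sdiff_of_subset (imE_subset_Lset hE), card_Lset]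
  obtain ⟨hsub, himg, hfun, hcof, hinc⟩ := mem_Eset.1 hE
  rw [card_image_fst hfun]
  have : E.card = k + 1 := by
    rw [← card_image_snd hcof, himg, Nat.card_Icc]
    omega
  omega

lemma card_R3 : (Finset.Icc (n + 2 * k + j + 2) (Nn n k j)).card = n + j := by
  rw [Nat.card_Icc, Nn]
  omega

lemma card_Aset : (Aset n k j).card = (Eset n k).card * (n + j).factorial := by
  have hmaps : ∀ M ∈ Aset n k j,
      M.filter (fun p => p.2 ≤ n + 2 * k + 1) ∈ Eset n k := by
    intro M hM
    obtain ⟨hf, hL, hR⟩ := mem_Aset.1 hM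
    rw [mem_Eset]
    have hmemR : ∀ p ∈ M, p.2 ∈ Rset n k j := by
      intro p hp
      rw [← hR]
      exact mem_image_of_mem _ hp
    have hmemL : ∀ p ∈ M, p.1 ∈ Lset n k j := by
      intro p hp
      rw [← hL]
      exact mem_image_of_mem _ hp
    refine ⟨?_, ?_, ?_, ?_, ?_⟩
    · intro p hp
      obtain ⟨hpM, hple⟩ := mem_filter.1 hp
      have h2 := hmemR p hpM
      have h1 := hmemL p hpM
      have h3 := (hf.1 p hpM).2.1
      simp only [Rset, Lset, Nn, Finset.mem_union, Finset.mem_Icc] at h1 h2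
      refine mem_product.2 ⟨?_, ?_⟩ <;> simp only [Finset.mem_Icc] <;> omega
    · apply Finset.Subset.antisymm
      · intro y hy
        obtain ⟨p, hp, rfl⟩ := mem_image.1 hy
        obtain ⟨hpM, hple⟩ := mem_filter.1 hp
        have h2 := hmemR p hpM
        simp only [Rset, Nn, Finset.mem_union, Finset.mem_Icc] at h2
        simp only [Finset.mem_Icc]
        omega
      · intro y hy
        simp only [Finset.mem_Icc] at hy
        have : y ∈ M.image Prod.snd := by
          rw [hR]
          simp only [Rset, Finset.mem_union, Finset.mem_Icc]
          omega
        obtain ⟨p, hp, rfl⟩ := mem_image.1 this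
        exact mem_image_of_mem _ (mem_filter.2 ⟨hp, by omega⟩)
    · intro p hp q hq
      exact hf.2.1 p (mem_filter.1 hp).1 q (mem_filter.1 hq).1
    · intro p hp q hq
      exact hf.2.2 p (mem_filter.1 hp).1 q (mem_filter.1 hq).1
    · intro p hp
      exact (hf.1 p (mem_filter.1 hp).1).2.1
  rw [Finset.card_eq_sum_card_fiberwise hmaps]
  have hfib : ∀ E ∈ Eset n k,
      ((Aset n k j).filter (fun M => M.filter (fun p => p.2 ≤ n + 2 * k + 1) = E)).card =
        (InjGraphs (Lset n k j \ E.image Prod.fst)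
          (Finset.Icc (n + 2 * k + j + 2) (Nn n k j))).card := by
    intro E hE
    obtain ⟨hEsub, hEimg, hEfun, hEcof, hEinc⟩ := mem_Eset.1 hE
    have hEbounds : ∀ p ∈ E, 1 ≤ p.1 ∧ p.1 ≤ n + k + 1 ∧ n + k + 1 ≤ p.2 ∧
        p.2 ≤ n + 2 * k + 1 := by
      intro p hp
      have := mem_product.1 (hEsub hp)
      simp only [Finset.mem_Icc] at this
      omega
    apply Finset.card_bij' (fun M _ => M \ E) (fun D _ => D ∪ E)
    · -- i maps into t
      intro M hM
      obtain ⟨hMA, hMf⟩ := mem_filter.1 hM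
      obtain ⟨hf, hL, hR⟩ := mem_Aset.1 hMA
      have hEM : E ⊆ M := by
        rw [← hMf]; exact filter_subset _ _
      have hnotE : ∀ p ∈ M, p ∉ E → ¬(p.2 ≤ n + 2 * k + 1) := by
        intro p hp hpe hle
        exact hpe (hMf ▸ mem_filter.2 ⟨hp, hle⟩)
      have hmemR : ∀ p ∈ M, p.2 ∈ Rset n k j := by
        intro p hp
        rw [← hR]; exact mem_image_of_mem _ hp
      have hfst : ∀ p ∈ M, p ∉ E → p.1 ∈ Lset n k j \ E.image Prod.fst := by
        intro p hp hpe
        rw [Finset.mem_sdiff]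
        constructor
        · rw [← hL]; exact mem_image_of_mem _ hp
        · intro hc
          obtain ⟨q, hq, hq1⟩ := mem_image.1 hc
          have : q = p := hf.2.1 q (hEM hq) p hp hq1
          rw [this] at hq
          exact hpe hq
      rw [mem_injGraphs]
      refine ⟨?_, ?_, ?_, ?_⟩
      · intro p hp
        obtain ⟨hpM, hpe⟩ := Finset.mem_sdiff.1 hp
        refine mem_product.2 ⟨hfst p hpM hpe, ?_⟩
        have h1 := hnotE p hpM hpe
        have h2 := hmemR p hpM
        simp only [Rset, Finset.mem_union, Finset.mem_Icc] at h2
        simp only [Finset.mem_Icc]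
        rcases h2 with h2 | h2
        · omega
        · exact h2
      · apply Finset.Subset.antisymm
        · intro x hx
          obtain ⟨p, hp, rfl⟩ := mem_image.1 hx
          obtain ⟨hpM, hpe⟩ := Finset.mem_sdiff.1 hp
          exact hfst p hpM hpe
        · intro x hx
          obtain ⟨hxL, hxE⟩ := Finset.mem_sdiff.1 hx
          have : x ∈ M.image Prod.fst := hL ▸ hxL
          obtain ⟨p, hp, rfl⟩ := mem_image.1 this
          refine mem_image_of_mem _ (Finset.mem_sdiff.2 ⟨hp, ?_⟩)
          intro hpe
          exact hxE (mem_image_of_mem _ hpe)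
      · intro p hp q hq
        exact hf.2.1 p (Finset.mem_sdiff.1 hp).1 q (Finset.mem_sdiff.1 hq).1
      · intro p hp q hq
        exact hf.2.2 p (Finset.mem_sdiff.1 hp).1 q (Finset.mem_sdiff.1 hq).1
    · -- j maps into s
      intro D hD
      rw [mem_injGraphs] at hD
      obtain ⟨hDsub, hDimg, hDfun, hDcof⟩ := hD
      have hDmem : ∀ p ∈ D, p.1 ∈ Lset n k j ∧ p.1 ∉ E.image Prod.fst ∧
          n + 2 * k + j + 2 ≤ p.2 ∧ p.2 ≤ Nn n k j := by
        intro p hp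
        have := mem_product.1 (hDsub hp)
        obtain ⟨h1, h2⟩ := this
        rw [Finset.mem_sdiff] at h1
        simp only [Finset.mem_Icc] at h2
        exact ⟨h1.1, h1.2, h2.1, h2.2⟩
      have hLmem : ∀ x ∈ Lset n k j, 1 ≤ x ∧ x ≤ n + 2 * k + j + 1 := by
        intro x hx
        simp only [Lset, Finset.mem_union, Finset.mem_Icc] at hx
        omega
      -- the image of snd on D is all of R3
      have hDsnd : D.image Prod.snd = Finset.Icc (n + 2 * k + j + 2) (Nn n k j) := by
        apply Finset.eq_of_subset_of_card_le
        · intro y hy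
          obtain ⟨p, hp, rfl⟩ := mem_image.1 hy
          have := hDmem p hp
          simp only [Finset.mem_Icc]
          omega
        · rw [card_R3, card_image_snd hDcof, ← card_image_fst hDfun, hDimg,
            card_Lset_sdiff hE]
      have hMfun : ∀ p ∈ D ∪ E, ∀ q ∈ D ∪ E, p.1 = q.1 → p = q := by
        intro p hp q hq hpq
        rcases Finset.mem_union.1 hp with hp | hp <;> rcases Finset.mem_union.1 hq with hq | hq
        · exact hDfun p hp q hq hpq
        · exfalso
          exact (hDmem p hp).2.1 (hpq ▸ mem_image_of_mem _ hq)
        · exfalso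
          exact (hDmem q hq).2.1 (hpq ▸ mem_image_of_mem _ hp)
        · exact hEfun p hp q hq hpq
      have hMcof : ∀ p ∈ D ∪ E, ∀ q ∈ D ∪ E, p.2 = q.2 → p = q := by
        intro p hp q hq hpq
        rcases Finset.mem_union.1 hp with hp | hp <;> rcases Finset.mem_union.1 hq with hq | hq
        · exact hDcof p hp q hq hpq
        · exfalso
          have h1 := (hDmem p hp).2.2
          have h2 := (hEbounds q hq).2.2
          omega
        · exfalso
          have h1 := (hDmem q hq).2.2
          have h2 := (hEbounds p hp).2.2
          omega
        · exact hEcof p hp q hq hpq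
      rw [mem_filter, mem_Aset]
      refine ⟨⟨⟨?_, hMfun, hMcof⟩, ?_, ?_⟩, ?_⟩
      · -- Hfun bounds
        intro p hp
        rcases Finset.mem_union.1 hp with hp | hp
        · have h1 := hDmem p hp
          have h2 := hLmem p.1 h1.1
          omega
        · have h1 := hEbounds p hp
          have h2 := hEinc p hp
          simp only [Nn]
          omega
      · rw [Finset.image_union, hDimg]
        exact Finset.sdiff_union_of_subset (imE_subset_Lset hE)
      · rw [Finset.image_union, hDsnd, hEimg, Rset, Finset.union_comm]
      · -- filter equals E
        rw [Finset.filter_union]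
        have h1 : D.filter (fun p => p.2 ≤ n + 2 * k + 1) = ∅ := by
          rw [Finset.filter_eq_empty_iff]
          intro p hp
          have := (hDmem p hp).2.2
          omega
        have h2 : E.filter (fun p => p.2 ≤ n + 2 * k + 1) = E := by
          apply Finset.filter_true_of_mem
          intro p hp
          exact (hEbounds p hp).2.2.2
        rw [h1, h2, Finset.empty_union]
    · -- left inverse : (M \ E) ∪ E = M
      intro M hM
      obtain ⟨hMA, hMf⟩ := mem_filter.1 hM
      have hEM : E ⊆ M := by
        rw [← hMf]
        exact filter_subset _ _
      exact Finset.sdiff_union_of_subset hEM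
    · -- right inverse : (D ∪ E) \ E = D
      intro D hD
      rw [mem_injGraphs] at hD
      have hdisj : ∀ p ∈ D, p ∉ E := by
        intro p hp hpe
        have h1 := mem_product.1 (hD.1 hp)
        have h2 := hEbounds p hpe
        simp only [Finset.mem_Icc] at h1
        have := h1.2
        omega
      ext p
      simp only [Finset.mem_sdiff, Finset.mem_union]
      constructor
      · rintro ⟨h | h, hne⟩
        · exact h
        · exact absurd h hne
      · intro h
        exact ⟨Or.inl h, hdisj p h⟩
  rw [Finset.sum_congr rfl hfib]
  have hconst : ∀ E ∈ Eset n k,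
      (InjGraphs (Lset n k j \ E.image Prod.fst)
        (Finset.Icc (n + 2 * k + j + 2) (Nn n k j))).card = (n + j).factorial := by
    intro E hE
    rw [card_injGraphs, card_R3, card_Lset_sdiff hE, Nat.descFactorial_self]
  rw [Finset.sum_congr rfl hconst, Finset.sum_const, smul_eq_mul]

end Decomp


lemma arith (n k j : ℕ) :
    (n + k) * (n + k).descFactorial k * (n + j).factorial =
      n.factorial *
        ((n + k).choose k * k.factorial * k + (n + k).choose (k + 1) * (k + 1).factorial) *
        ((n + j).choose j) * j.factorial := by
  have c1 : (n + k).choose k * k.factorial = (n + k).descFactorial k := by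
    rw [Nat.descFactorial_eq_factorial_mul_choose]; ring
  have c2 : (n + k).choose (k + 1) * (k + 1).factorial = n * (n + k).descFactorial k := by
    have e2 := Nat.descFactorial_eq_factorial_mul_choose (n + k) (k + 1)
    have e3 : (n + k).descFactorial (k + 1) = n * (n + k).descFactorial k := by
      rw [Nat.descFactorial_succ]
      congr 1
      omega
    rw [← e3, e2]; ring
  have e4 : (n + j).choose j * j.factorial * n.factorial = (n + j).factorial := by
    have h := Nat.choose_mul_factorial_mul_factorial (Nat.le_add_left j n)
    simpa using h
  calc (n + k) * (n + k).descFactorial k * (n + j).factorial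
      = (n + k).descFactorial k * k * ((n + j).choose j * j.factorial * n.factorial) +
          n * (n + k).descFactorial k * ((n + j).choose j * j.factorial * n.factorial) := by
        rw [e4]; ring
    _ = n.factorial *
        ((n + k).choose k * k.factorial * k + (n + k).choose (k + 1) * (k + 1).factorial) *
        ((n + j).choose j) * j.factorial := by
        rw [c1, c2]; ring

end St10

theorem stmt10 (n k j : ℕ) (hn : 1 ≤ n) (hj : 1 ≤ j) :
    Nat.card {P : Finpartition (Finset.Icc (1 : ℕ) (2 * (n + k + j) + 1)) //
      (∀ i ∈ Finset.Icc (1 : ℕ) (2 * (n + k + j) + 1), vtype P i ≠ VType.fixedpt) ∧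
      (∀ i ∈ Finset.Icc (1 : ℕ) (n + k), vtype P i = VType.opener) ∧
      vtype P (n + k + 1) = VType.transitory ∧
      (∀ i ∈ Finset.Icc (n + k + 2) (n + 2 * k + 1), vtype P i = VType.closer) ∧
      (∀ i ∈ Finset.Icc (n + 2 * k + 2) (n + 2 * k + j + 1), vtype P i = VType.opener) ∧
      (∀ i ∈ Finset.Icc (n + 2 * k + j + 2) (2 * (n + k + j) + 1),
        vtype P i = VType.closer)} =
    n.factorial *
      ((n + k).choose k * k.factorial * k + (n + k).choose (k + 1) * (k + 1).factorial) *
      ((n + j).choose j) * j.factorial := by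
  have h := St10.card_eq_Aset (n := n) (k := k) (j := j)
  rw [St10.card_Aset, St10.card_Eset] at h
  rw [← St10.arith n k j]
  exact h
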